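/- For λ ∈ (-1,1) and N ≥ 3, the real symmetric matrix P₂ with P₂_{1,2} = P₂_{2,1} = P₂_{N-1,N} = P₂_{N,N-1} = 1-λ, P₂_{k,k+1} = P₂_{k+1,k} = 1 for 2 ≤ k ≤ N-2, and zeros elsewhere, satisfies H(λ)ᵀ P₂ = P₂ H(λ). -/
import Mathlib


open Matrix Polynomial

/-- The N×N discrete PT-symmetric square-well Hamiltonian (0-indexed). -/
noncomputable def Ham (N : ℕ) (l : ℝ) : Matrix (Fin N) (Fin N) ℝ :=
  Matrix.of fun i j =>
    if (i : ℕ) = j then 2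
    else if (j : ℕ) = (i : ℕ) + 1 then
      (if (i : ℕ) = 0 then -1 - l else if (j : ℕ) = N - 1 then -1 + l else -1)
    else if (i : ℕ) = (j : ℕ) + 1 then
      (if (j : ℕ) = 0 then -1 + l else if (i : ℕ) = N - 1 then -1 - l else -1)
    else 0

/-- The bidiagonal pseudometric. -/
noncomputable def P2 (N : ℕ) (l : ℝ) : Matrix (Fin N) (Fin N) ℝ :=
  Matrix.of fun i j =>
    if (j : ℕ) = (i : ℕ) + 1 ∨ (i : ℕ) = (j : ℕ) + 1 then
      (if min (i : ℕ) (j : ℕ) = 0 ∨ min (i : ℕ) (j : ℕ) = N - 2 then 1 - l else 1)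
    else 0

/-- ℕ-indexed entries of `Ham`. -/
noncomputable def hamval (N : ℕ) (l : ℝ) (a b : ℕ) : ℝ :=
  if a = b then 2
  else if b = a + 1 then (if a = 0 then -1 - l else if b = N - 1 then -1 + l else -1)
  else if a = b + 1 then (if b = 0 then -1 + l else if a = N - 1 then -1 - l else -1)
  else 0

lemma ham_eq_hamval (N : ℕ) (l : ℝ) (a b : Fin N) :
    Ham N l a b = hamval N l (a : ℕ) (b : ℕ) := rfl

lemma hamval_far (N : ℕ) (l : ℝ) (a b : ℕ) (h1 : ¬ a = b) (h2 : ¬ b = a + 1)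
    (h3 : ¬ a = b + 1) : hamval N l a b = 0 := by
  rw [hamval, if_neg h1, if_neg h2, if_neg h3]

lemma ite_hamval_far {N : ℕ} {l : ℝ} {c : Prop} [Decidable c] (a b : ℕ)
    (h : c → ¬ a = b ∧ ¬ b = a + 1 ∧ ¬ a = b + 1) :
    (if c then hamval N l a b else 0) = 0 := by
  split_ifs with hc
  · exact hamval_far N l a b (h hc).1 (h hc).2.1 (h hc).2.2
  · rfl

lemma hamval_diag (N : ℕ) (l : ℝ) (a : ℕ) : hamval N l a a = 2 := by
  rw [hamval, if_pos rfl]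

lemma hamval_sub (N : ℕ) (l : ℝ) (a : ℕ) :
    hamval N l (a + 1) a =
      (if a = 0 then -1 + l else if a + 1 = N - 1 then -1 - l else -1) := by
  rw [hamval, if_neg (by omega), if_neg (by omega), if_pos rfl]

lemma hamval_super (N : ℕ) (l : ℝ) (a : ℕ) :
    hamval N l a (a + 1) =
      (if a = 0 then -1 - l else if a + 1 = N - 1 then -1 + l else -1) := by
  rw [hamval, if_neg (by omega), if_pos rfl]

lemma sum_ite_val {N : ℕ} (a : ℕ) (f : Fin N → ℝ) :
    ∑ j : Fin N, (if (j:ℕ) = a then f j else 0) =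
      if h : a < N then f ⟨a, h⟩ else 0 := by
  split_ifs with h
  · rw [Finset.sum_eq_single (⟨a, h⟩ : Fin N)]
    · simp
    · intro b _ hb
      rw [if_neg]
      simpa [Fin.ext_iff] using hb
    · simp
  · apply Finset.sum_eq_zero
    intro b _
    rw [if_neg]
    exact fun hb => h (hb ▸ b.isLt)

lemma sum_ite_val' {N : ℕ} (a : ℕ) (f : Fin N → ℝ) :
    ∑ j : Fin N, (if (j:ℕ) + 1 = a then f j else 0) =
      if h : 1 ≤ a ∧ a - 1 < N then f ⟨a - 1, h.2⟩ else 0 := by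
  split_ifs with h
  · rw [Finset.sum_eq_single (⟨a - 1, h.2⟩ : Fin N)]
    · rw [if_pos (by simp only [Fin.val_mk]; omega)]
    · intro b _ hb
      rw [if_neg]
      intro hc
      exact hb (Fin.val_inj.mp (by show (b:ℕ) = a - 1; omega))
    · exact fun hx => absurd (Finset.mem_univ _) hx
  · apply Finset.sum_eq_zero
    intro b _
    rw [if_neg]
    have := b.isLt
    omega

lemma sum_ite_val2 {N : ℕ} (a : ℕ) (g : ℕ → ℝ) :
    ∑ j : Fin N, (if (j:ℕ) = a then g (j:ℕ) else 0) =
      if a < N then g a else 0 := by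
  rw [sum_ite_val a (fun j => g (j:ℕ))]
  split_ifs <;> simp

lemma sum_ite_val2' {N : ℕ} (a : ℕ) (g : ℕ → ℝ) :
    ∑ j : Fin N, (if (j:ℕ) + 1 = a then g (j:ℕ) else 0) =
      if 1 ≤ a ∧ a - 1 < N then g (a - 1) else 0 := by
  rw [sum_ite_val' a (fun j => g (j:ℕ))]
  split_ifs <;> simp

set_option maxHeartbeats 1000000 in
theorem stmt8 (N : ℕ) (hN : 3 ≤ N) (l : ℝ) (hl : l ∈ Set.Ioo (-1 : ℝ) 1) :
    (Ham N l)ᵀ * P2 N l = P2 N l * Ham N l := by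
  ext i k
  have hiN := i.isLt
  have hkN := k.isLt
  rw [mul_apply, mul_apply]
  have hL : ∑ j, (Ham N l)ᵀ i j * P2 N l j k =
      (if (k:ℕ) + 1 < N then hamval N l ((k:ℕ)+1) i else 0) *
        (if (k:ℕ) = 0 ∨ (k:ℕ) = N - 2 then 1 - l else 1)
      + (if 1 ≤ (k:ℕ) ∧ (k:ℕ) - 1 < N then hamval N l ((k:ℕ)-1) i else 0) *
        (if (k:ℕ) - 1 = 0 ∨ (k:ℕ) - 1 = N - 2 then 1 - l else 1) := by
    rw [← sum_ite_val2 ((k:ℕ)+1) (fun a => hamval N l a i),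
        ← sum_ite_val2' (a := (k:ℕ)) (fun a => hamval N l a i),
        Finset.sum_mul, Finset.sum_mul, ← Finset.sum_add_distrib]
    refine Finset.sum_congr rfl fun j _ => ?_
    simp only [transpose_apply, P2, of_apply, ham_eq_hamval]
    by_cases h1 : (j:ℕ) = (k:ℕ) + 1
    · have hm : min (j:ℕ) (k:ℕ) = (k:ℕ) := by omega
      have h2 : ¬ ((j:ℕ) + 1 = (k:ℕ)) := by omega
      rw [if_pos (Or.inr h1), hm, if_pos h1, if_neg h2, h1]
      ring
    · by_cases h2 : (j:ℕ) + 1 = (k:ℕ)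
      · have hm : min (j:ℕ) (k:ℕ) = (k:ℕ) - 1 := by omega
        have hj : (j:ℕ) = (k:ℕ) - 1 := by omega
        rw [if_pos (Or.inl h2.symm), hm, if_neg h1, if_pos h2, hj]
        ring
      · rw [if_neg (by omega : ¬((k:ℕ) = (j:ℕ) + 1 ∨ (j:ℕ) = (k:ℕ) + 1)),
            if_neg h1, if_neg h2]
        ring
  have hR : ∑ j, P2 N l i j * Ham N l j k =
      (if (i:ℕ) = 0 ∨ (i:ℕ) = N - 2 then 1 - l else 1) *
        (if (i:ℕ) + 1 < N then hamval N l ((i:ℕ)+1) k else 0)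
      + (if (i:ℕ) - 1 = 0 ∨ (i:ℕ) - 1 = N - 2 then 1 - l else 1) *
        (if 1 ≤ (i:ℕ) ∧ (i:ℕ) - 1 < N then hamval N l ((i:ℕ)-1) k else 0) := by
    rw [← sum_ite_val2 ((i:ℕ)+1) (fun a => hamval N l a k),
        ← sum_ite_val2' (a := (i:ℕ)) (fun a => hamval N l a k),
        Finset.mul_sum, Finset.mul_sum, ← Finset.sum_add_distrib]
    refine Finset.sum_congr rfl fun j _ => ?_
    simp only [P2, of_apply, ham_eq_hamval]
    by_cases h1 : (j:ℕ) = (i:ℕ) + 1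
    · have hm : min (i:ℕ) (j:ℕ) = (i:ℕ) := by omega
      have h2 : ¬ ((j:ℕ) + 1 = (i:ℕ)) := by omega
      rw [if_pos (Or.inl h1), hm, if_pos h1, if_neg h2, h1]
      ring
    · by_cases h2 : (j:ℕ) + 1 = (i:ℕ)
      · have hm : min (i:ℕ) (j:ℕ) = (i:ℕ) - 1 := by omega
        have hj : (j:ℕ) = (i:ℕ) - 1 := by omega
        rw [if_pos (Or.inr h2.symm), hm, if_neg h1, if_pos h2, hj]
        ring
      · rw [if_neg (by omega : ¬((j:ℕ) = (i:ℕ) + 1 ∨ (i:ℕ) = (j:ℕ) + 1)),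
            if_neg h1, if_neg h2]
        ring
  rw [hL, hR]
  clear hL hR hl
  rcases (by omega : (i:ℕ) = (k:ℕ) ∨ (i:ℕ) + 1 = (k:ℕ) ∨ (i:ℕ) + 2 = (k:ℕ) ∨
      (k:ℕ) + 1 = (i:ℕ) ∨ (k:ℕ) + 2 = (i:ℕ) ∨ ((i:ℕ) + 3 ≤ (k:ℕ) ∨ (k:ℕ) + 3 ≤ (i:ℕ)))
    with h | h | h | h | h | h
  · -- i = k
    rw [h]
    ring
  · -- k = i + 1
    rw [show (k:ℕ) - 1 = (i:ℕ) from by omega, show (k:ℕ) = (i:ℕ) + 1 from by omega,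
        ite_hamval_far ((i:ℕ)+1+1) (i:ℕ) (fun _ => by refine ⟨?_, ?_, ?_⟩ <;> omega),
        ite_hamval_far ((i:ℕ)-1) ((i:ℕ)+1) (fun hc => by refine ⟨?_, ?_, ?_⟩ <;> omega),
        if_pos (by omega : 1 ≤ (i:ℕ) + 1 ∧ (i:ℕ) < N),
        if_pos (by omega : (i:ℕ) + 1 < N),
        hamval_diag, hamval_diag]
    ring
  · -- k = i + 2
    rw [show (k:ℕ) - 1 = (i:ℕ) + 1 from by omega,
        show (k:ℕ) = (i:ℕ) + 1 + 1 from by omega,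
        ite_hamval_far ((i:ℕ)+1+1+1) (i:ℕ) (fun _ => by refine ⟨?_, ?_, ?_⟩ <;> omega),
        ite_hamval_far ((i:ℕ)-1) ((i:ℕ)+1+1) (fun hc => by refine ⟨?_, ?_, ?_⟩ <;> omega),
        if_pos (by omega : 1 ≤ (i:ℕ) + 1 + 1 ∧ (i:ℕ) + 1 < N),
        if_pos (by omega : (i:ℕ) + 1 < N),
        hamval_sub, hamval_super]
    split_ifs <;> first | ring1 | (exfalso; (try casesm* (_ ∨ _), False) <;> omega)
  · -- i = k + 1
    rw [show (i:ℕ) - 1 = (k:ℕ) from by omega, show (i:ℕ) = (k:ℕ) + 1 from by omega,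
        ite_hamval_far ((k:ℕ)-1) ((k:ℕ)+1) (fun hc => by refine ⟨?_, ?_, ?_⟩ <;> omega),
        ite_hamval_far ((k:ℕ)+1+1) (k:ℕ) (fun _ => by refine ⟨?_, ?_, ?_⟩ <;> omega),
        if_pos (by omega : (k:ℕ) + 1 < N),
        if_pos (by omega : 1 ≤ (k:ℕ) + 1 ∧ (k:ℕ) < N),
        hamval_diag, hamval_diag]
    ring
  · -- i = k + 2
    rw [show (i:ℕ) - 1 = (k:ℕ) + 1 from by omega,
        show (i:ℕ) = (k:ℕ) + 1 + 1 from by omega,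
        ite_hamval_far ((k:ℕ)-1) ((k:ℕ)+1+1) (fun hc => by refine ⟨?_, ?_, ?_⟩ <;> omega),
        ite_hamval_far ((k:ℕ)+1+1+1) (k:ℕ) (fun _ => by refine ⟨?_, ?_, ?_⟩ <;> omega),
        if_pos (by omega : (k:ℕ) + 1 < N),
        if_pos (by omega : 1 ≤ (k:ℕ) + 1 + 1 ∧ (k:ℕ) + 1 < N),
        hamval_super, hamval_sub]
    split_ifs <;> first | ring1 | (exfalso; (try casesm* (_ ∨ _), False) <;> omega)
  · -- |i - k| ≥ 3
    rw [hamval_far N l ((k:ℕ)+1) i (by omega) (by omega) (by omega),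
        hamval_far N l ((k:ℕ)-1) i (by omega) (by omega) (by omega),
        hamval_far N l ((i:ℕ)+1) k (by omega) (by omega) (by omega),
        hamval_far N l ((i:ℕ)-1) k (by omega) (by omega) (by omega),
        ite_self, ite_self, ite_self, ite_self]
    ring
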